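/- Let E be a complete real inner product space and let g1, g2 ∈ E with g1 ≠ 0. Define g̃2 = g2 - δ(⟪g1,g2⟫ < 0)·(⟪g1,g2⟫/‖g1‖²)·g1. Then g̃2 is the unique minimizer of the function x ↦ ‖g2 - x‖ over the feasible set K = {x ∈ E : ⟪x,g1⟫ ≥ 0 and ⟪x,g2⟫ ≥ 0}; that is, g̃2 ∈ K, and for every x ∈ K one has ‖g2 - g̃2‖ ≤ ‖g2 - x‖, with equality only if x = g̃2. -/

import Mathlib

open scoped RealInnerProductSpace

/-- **Lemma 2 (GH).** In a complete real inner product space, with `g1 ≠ 0`, the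
GH-harmonized gradient `g̃2 = g2 - δ(⟪g1,g2⟫ < 0) * (⟪g1,g2⟫/‖g1‖²) • g1` is the unique
minimizer of `x ↦ ‖g2 - x‖` over `K = {x | ⟪x,g1⟫ ≥ 0 ∧ ⟪x,g2⟫ ≥ 0}`. -/
theorem gh_lemma2 {E : Type*} [NormedAddCommGroup E] [InnerProductSpace ℝ E] [CompleteSpace E]
    (g1 g2 : E) (hg1 : g1 ≠ 0)
    (K : Set E) (hK : K = {x : E | 0 ≤ ⟪x, g1⟫ ∧ 0 ≤ ⟪x, g2⟫})
    (g2t : E)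
    (hg2t : g2t = g2 - ((if ⟪g1, g2⟫ < 0 then (1 : ℝ) else 0) * (⟪g1, g2⟫ / ‖g1‖ ^ 2)) • g1) :
    g2t ∈ K ∧ ∀ x ∈ K, ‖g2 - g2t‖ ≤ ‖g2 - x‖ ∧ (‖g2 - g2t‖ = ‖g2 - x‖ → x = g2t) := by
  subst hK
  have hn : (0:ℝ) < ‖g1‖ := norm_pos_iff.mpr hg1
  by_cases h : ⟪g1, g2⟫ < 0
  · rw [if_pos h, one_mul] at hg2t
    set c : ℝ := ⟪g1, g2⟫ / ‖g1‖ ^ 2 with hc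
    have hc0 : c < 0 := div_neg_of_neg_of_pos h (by positivity)
    have hip : ⟪g2t, g1⟫ = 0 := by
      rw [hg2t, inner_sub_left, real_inner_smul_left, real_inner_self_eq_norm_sq,
        real_inner_comm, hc]
      field_simp
      ring
    have hcs : ⟪g1, g2⟫ ^ 2 ≤ ‖g1‖ ^ 2 * ‖g2‖ ^ 2 := by
      have h1 := abs_real_inner_le_norm g1 g2
      nlinarith [abs_nonneg ⟪g1, g2⟫, sq_abs ⟪g1, g2⟫, norm_nonneg g1, norm_nonneg g2]
    have hmem2 : 0 ≤ ⟪g2t, g2⟫ := by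
      rw [hg2t, inner_sub_left, real_inner_smul_left, real_inner_self_eq_norm_sq, hc]
      rw [div_mul_eq_mul_div, sub_nonneg, div_le_iff₀ (by positivity)]
      nlinarith
    have hdiff : g2 - g2t = c • g1 := by rw [hg2t]; abel
    refine ⟨⟨le_of_eq hip.symm, hmem2⟩, fun x hx => ?_⟩
    obtain ⟨hx1, hx2⟩ := hx
    have key : ‖g2 - x‖ ^ 2 = ‖g2t - x‖ ^ 2 + 2 * ⟪g2t - x, g2 - g2t⟫ + ‖g2 - g2t‖ ^ 2 := by
      rw [show g2 - x = (g2t - x) + (g2 - g2t) by abel]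
      exact norm_add_sq_real _ _
    have hinn : ⟪g2t - x, g2 - g2t⟫ = -(c * ⟪x, g1⟫) := by
      rw [hdiff, real_inner_smul_right, inner_sub_left, hip]; ring
    have hinn0 : 0 ≤ ⟪g2t - x, g2 - g2t⟫ := by
      rw [hinn]; nlinarith
    have hsq : ‖g2 - g2t‖ ^ 2 + ‖g2t - x‖ ^ 2 ≤ ‖g2 - x‖ ^ 2 := by linarith
    have hle : ‖g2 - g2t‖ ≤ ‖g2 - x‖ := by
      nlinarith [norm_nonneg (g2 - g2t), norm_nonneg (g2 - x), sq_nonneg ‖g2t - x‖]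
    refine ⟨hle, fun heq => ?_⟩
    have : ‖g2t - x‖ ^ 2 ≤ 0 := by rw [← heq] at hsq; linarith
    have : g2t - x = 0 := by
      rw [← norm_eq_zero]
      nlinarith [norm_nonneg (g2t - x)]
    symm; exact sub_eq_zero.mp this
  · rw [if_neg h, zero_mul, zero_smul, sub_zero] at hg2t
    rw [hg2t]
    refine ⟨⟨by rw [real_inner_comm]; linarith, real_inner_self_nonneg⟩, fun x hx => ?_⟩
    simp only [sub_self, norm_zero]
    exact ⟨norm_nonneg _, fun heq => by
      have h0 : g2 - x = 0 := norm_eq_zero.mp heq.symm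
      symm; exact sub_eq_zero.mp h0⟩
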